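/- For any constant c ≥ 0, the map F defined on measure-preserving functions f : (X,p) → (Y,q) between finite measure spaces by F(f) = c(H(p) − H(q)), where H is the extended Shannon entropy, takes values in [0,∞) and satisfies functoriality (F(f ∘ g) = F(f) + F(g)), additivity (F(f ⊕ g) = F(f) + F(g)), homogeneity (F(λf) = λF(f) for λ ∈ [0,∞)), and continuity. -/

import Mathlib

open scoped BigOperators Classical
open Filter Topology Real

/-- `p` is a probability measure on the finite set `X`. -/
def IsProb {X : Type} [Fintype X] (p : X → ℝ) : Prop :=
  (∀ i, 0 ≤ p i) ∧ ∑ i, p i = 1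

/-- `p` is a (nonnegative) measure on the finite set `X`. -/
def IsMeas {X : Type} [Fintype X] (p : X → ℝ) : Prop :=
  ∀ i, 0 ≤ p i

/-- `f` is a measure-preserving function from `(X, p)` to `(Y, q)`. -/
def IsMP {X Y : Type} [Fintype X] [Fintype Y] (p : X → ℝ) (q : Y → ℝ) (f : X → Y) : Prop :=
  ∀ j : Y, q j = ∑ i, if f i = j then p i else 0

/-- Shannon entropy (with the convention `0 * log 0 = 0`, automatic since `Real.log 0 = 0`). -/
noncomputable def shannon {X : Type} [Fintype X] (p : X → ℝ) : ℝ :=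
  -∑ i, p i * Real.log (p i)

/-- The convex combination `λ p ⊕ (1 - λ) q` on the disjoint union. -/
noncomputable def cvx (lam : ℝ) {X Y : Type} (p : X → ℝ) (q : Y → ℝ) : X ⊕ Y → ℝ :=
  Sum.elim (fun i => lam * p i) (fun j => (1 - lam) * q j)

/-- The direct sum `p ⊕ q` on the disjoint union. -/
def dsum {X Y : Type} (p : X → ℝ) (q : Y → ℝ) : X ⊕ Y → ℝ :=
  Sum.elim p q

/-- Extended Shannon entropy of a measure on a finite set. -/
noncomputable def shannonExt {X : Type} [Fintype X] (p : X → ℝ) : ℝ :=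
  if (∑ i, p i) = 0 then 0 else (∑ i, p i) * shannon (fun i => p i / ∑ j, p j)

/-- Tsallis entropy of order `α` of a probability measure. -/
noncomputable def tsallis (α : ℝ) {X : Type} [Fintype X] (p : X → ℝ) : ℝ :=
  if α = 1 then shannon p else (1 / (α - 1)) * (1 - ∑ i, p i ^ α)

/-- Extended Tsallis entropy of order `α` of a measure on a finite set. -/
noncomputable def tsallisExt (α : ℝ) {X : Type} [Fintype X] (p : X → ℝ) : ℝ :=
  if (∑ i, p i) = 0 then 0 else (∑ i, p i) ^ α * tsallis α (fun i => p i / ∑ j, p j)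

noncomputable def phi (x : ℝ) : ℝ := x * Real.log x

lemma continuous_phi : Continuous phi := Real.continuous_mul_log

lemma shannonExt_eq {X : Type} [Fintype X] (p : X → ℝ) (hp : IsMeas p) :
    shannonExt p = phi (∑ i, p i) - ∑ i, phi (p i) := by
  unfold shannonExt shannon phi
  by_cases h : (∑ i, p i) = 0
  · have hz : ∀ i ∈ Finset.univ, p i = 0 :=
      (Finset.sum_eq_zero_iff_of_nonneg (fun i _ => hp i)).mp h
    simp only [h, if_true]
    rw [Finset.sum_congr rfl (fun i hi => by rw [hz i hi])]
    simp
  · simp only [h, if_false]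
    have key : ∀ i : X, (∑ j, p j) * ((p i / ∑ j, p j) * Real.log (p i / ∑ j, p j))
        = p i * Real.log (p i) - p i * Real.log (∑ j, p j) := by
      intro i
      by_cases hi : p i = 0
      · simp [hi]
      · rw [Real.log_div hi h]; field_simp
    rw [mul_neg, Finset.mul_sum, Finset.sum_congr rfl (fun i _ => key i),
      Finset.sum_sub_distrib, ← Finset.sum_mul]
    ring

lemma phi_add_le (a b : ℝ) (ha : 0 ≤ a) (hb : 0 ≤ b) : phi a + phi b ≤ phi (a + b) := by
  unfold phi
  have h1 : a * Real.log a ≤ a * Real.log (a + b) := by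
    rcases eq_or_lt_of_le ha with h | h
    · simp [← h]
    · exact mul_le_mul_of_nonneg_left (Real.log_le_log h (by linarith)) ha
  have h2 : b * Real.log b ≤ b * Real.log (a + b) := by
    rcases eq_or_lt_of_le hb with h | h
    · simp [← h]
    · exact mul_le_mul_of_nonneg_left (Real.log_le_log h (by linarith)) hb
  nlinarith [h1, h2]

lemma sum_phi_le {X : Type} (s : Finset X) (p : X → ℝ) (hp : ∀ i, 0 ≤ p i) :
    ∑ i ∈ s, phi (p i) ≤ phi (∑ i ∈ s, p i) := by
  induction s using Finset.cons_induction with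
  | empty => simp [phi]
  | cons a s ha ih =>
    rw [Finset.sum_cons, Finset.sum_cons]
    calc phi (p a) + ∑ i ∈ s, phi (p i) ≤ phi (p a) + phi (∑ i ∈ s, p i) := by linarith
      _ ≤ phi (p a + ∑ i ∈ s, p i) :=
        phi_add_le _ _ (hp a) (Finset.sum_nonneg fun i _ => hp i)

lemma mp_total {X Y : Type} [Fintype X] [Fintype Y] {p : X → ℝ} {q : Y → ℝ} {f : X → Y}
    (h : IsMP p q f) : ∑ j, q j = ∑ i, p i := by
  rw [Finset.sum_congr rfl (fun j _ => h j)]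
  rw [Finset.sum_comm]
  apply Finset.sum_congr rfl
  intro i _
  rw [Finset.sum_ite_eq Finset.univ (f i) (fun _ => p i)]
  simp

lemma mp_phi_le {X Y : Type} [Fintype X] [Fintype Y] {p : X → ℝ} {q : Y → ℝ} {f : X → Y}
    (hp : IsMeas p) (h : IsMP p q f) : ∑ i, phi (p i) ≤ ∑ j, phi (q j) := by
  have step : ∀ j : Y, ∑ i, (if f i = j then phi (p i) else 0) ≤ phi (q j) := by
    intro j
    rw [h j]
    calc ∑ i, (if f i = j then phi (p i) else 0)
        = ∑ i, phi (if f i = j then p i else 0) := by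
          apply Finset.sum_congr rfl; intro i _; split <;> simp [phi]
      _ ≤ phi (∑ i, if f i = j then p i else 0) := by
          have hnn : ∀ i : X, 0 ≤ if f i = j then p i else 0 := by
            intro i; split
            · exact hp i
            · exact le_rfl
          exact sum_phi_le Finset.univ (fun i => if f i = j then p i else 0) hnn
  have e1 : ∑ i, phi (p i) = ∑ i, ∑ j, (if f i = j then phi (p i) else 0) := by
    apply Finset.sum_congr rfl
    intro i _
    rw [Finset.sum_ite_eq Finset.univ (f i) (fun _ => phi (p i))]
    simp
  rw [e1, Finset.sum_comm]
  exact Finset.sum_le_sum fun j _ => step j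

lemma phi_smul (lam a : ℝ) : 0 ≤ lam → 0 ≤ a →
    phi (lam * a) = lam * phi a + a * (lam * Real.log lam) := by
  intro hl ha
  rcases eq_or_lt_of_le hl with h | h
  · simp [← h, phi]
  rcases eq_or_lt_of_le ha with h' | h'
  · simp [← h', phi]
  unfold phi
  rw [Real.log_mul (ne_of_gt h) (ne_of_gt h')]
  ring

lemma shannonExt_smul {X : Type} [Fintype X] (p : X → ℝ) (lam : ℝ) (hl : 0 ≤ lam)
    (hp : IsMeas p) : shannonExt (fun i => lam * p i) = lam * shannonExt p := by
  rw [shannonExt_eq _ hp, shannonExt_eq (fun i => lam * p i)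
    (fun i => mul_nonneg hl (hp i))]
  rw [← Finset.mul_sum, phi_smul lam _ hl (Finset.sum_nonneg fun i _ => hp i)]
  rw [Finset.sum_congr rfl (fun i _ => phi_smul lam (p i) hl (hp i))]
  rw [Finset.sum_add_distrib, ← Finset.mul_sum, ← Finset.sum_mul]
  ring

/-- The map `f ↦ c (H(p) - H(q))` on finite measure spaces is nonnegative, functorial,
additive, homogeneous and continuous. -/
theorem stmt3 (c : ℝ) (hc : 0 ≤ c) :
    -- takes values in [0, ∞)
    (∀ {X Y : Type} [Fintype X] [Fintype Y] (p : X → ℝ) (q : Y → ℝ) (f : X → Y),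
      IsMeas p → IsMeas q → IsMP p q f → 0 ≤ c * (shannonExt p - shannonExt q)) ∧
    -- functoriality
    (∀ {X Y Z : Type} [Fintype X] [Fintype Y] [Fintype Z]
      (p : X → ℝ) (q : Y → ℝ) (r : Z → ℝ) (g : X → Y) (f : Y → Z),
      IsMeas p → IsMeas q → IsMeas r → IsMP p q g → IsMP q r f →
      c * (shannonExt p - shannonExt r)
        = c * (shannonExt q - shannonExt r) + c * (shannonExt p - shannonExt q)) ∧
    -- additivity
    (∀ {X X' Y Y' : Type} [Fintype X] [Fintype X'] [Fintype Y] [Fintype Y']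
      (p : X → ℝ) (p' : X' → ℝ) (q : Y → ℝ) (q' : Y' → ℝ) (f : X → X') (g : Y → Y'),
      IsMeas p → IsMeas p' → IsMeas q → IsMeas q' → IsMP p p' f → IsMP q q' g →
      c * (shannonExt (dsum p q) - shannonExt (dsum p' q'))
        = c * (shannonExt p - shannonExt p') + c * (shannonExt q - shannonExt q')) ∧
    -- homogeneity
    (∀ {X Y : Type} [Fintype X] [Fintype Y] (p : X → ℝ) (q : Y → ℝ) (f : X → Y)
      (lam : ℝ), 0 ≤ lam → IsMeas p → IsMeas q → IsMP p q f →
      c * (shannonExt (fun i => lam * p i) - shannonExt (fun j => lam * q j))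
        = lam * (c * (shannonExt p - shannonExt q))) ∧
    -- continuity
    (∀ {X Y : Type} [Fintype X] [Fintype Y]
      (pn : ℕ → X → ℝ) (qn : ℕ → Y → ℝ) (fn : ℕ → X → Y)
      (p : X → ℝ) (q : Y → ℝ) (f : X → Y),
      (∀ n, IsMeas (pn n)) → (∀ n, IsMeas (qn n)) → (∀ n, IsMP (pn n) (qn n) (fn n)) →
      IsMeas p → IsMeas q → IsMP p q f →
      (∀ᶠ n in atTop, fn n = f) →
      (∀ i, Tendsto (fun n => pn n i) atTop (𝓝 (p i))) →
      (∀ j, Tendsto (fun n => qn n j) atTop (𝓝 (q j))) →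
      Tendsto (fun n => c * (shannonExt (pn n) - shannonExt (qn n))) atTop
        (𝓝 (c * (shannonExt p - shannonExt q)))) := by

  refine ⟨?_, ?_, ?_, ?_, ?_⟩
  · -- nonnegativity
    intro X Y _ _ p q f hp hq hf
    apply mul_nonneg hc
    rw [shannonExt_eq p hp, shannonExt_eq q hq, mp_total hf]
    have := mp_phi_le hp hf
    linarith
  · -- functoriality
    intros; ring
  · -- additivity
    intro X X' Y Y' _ _ _ _ p p' q q' f g hp hp' hq hq' hf hg
    have hd : IsMeas (dsum p q) := by intro i; cases i <;> [exact hp _; exact hq _]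
    have hd' : IsMeas (dsum p' q') := by intro i; cases i <;> [exact hp' _; exact hq' _]
    rw [shannonExt_eq _ hd, shannonExt_eq _ hd', shannonExt_eq p hp, shannonExt_eq p' hp',
      shannonExt_eq q hq, shannonExt_eq q' hq']
    simp only [Fintype.sum_sum_type, dsum, Sum.elim_inl, Sum.elim_inr]
    rw [mp_total hf, mp_total hg]
    ring
  · -- homogeneity
    intro X Y _ _ p q f lam hl hp hq hf
    rw [shannonExt_smul p lam hl hp, shannonExt_smul q lam hl hq]
    ring
  · -- continuity
    intro X Y _ _ pn qn fn p q f hpn hqn hfn hp hq hf _ hpt hqt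
    have hSp : Tendsto (fun n => ∑ i, pn n i) atTop (𝓝 (∑ i, p i)) :=
      tendsto_finset_sum _ (fun i _ => hpt i)
    have hSq : Tendsto (fun n => ∑ j, qn n j) atTop (𝓝 (∑ j, q j)) :=
      tendsto_finset_sum _ (fun j _ => hqt j)
    have h1 : Tendsto (fun n => phi (∑ i, pn n i)) atTop (𝓝 (phi (∑ i, p i))) :=
      (continuous_phi.tendsto _).comp hSp
    have h2 : Tendsto (fun n => ∑ i, phi (pn n i)) atTop (𝓝 (∑ i, phi (p i))) :=
      tendsto_finset_sum _ (fun i _ => (continuous_phi.tendsto _).comp (hpt i))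
    have h3 : Tendsto (fun n => phi (∑ j, qn n j)) atTop (𝓝 (phi (∑ j, q j))) :=
      (continuous_phi.tendsto _).comp hSq
    have h4 : Tendsto (fun n => ∑ j, phi (qn n j)) atTop (𝓝 (∑ j, phi (q j))) :=
      tendsto_finset_sum _ (fun j _ => (continuous_phi.tendsto _).comp (hqt j))
    have key : Tendsto (fun n =>
        c * ((phi (∑ i, pn n i) - ∑ i, phi (pn n i)) - (phi (∑ j, qn n j) - ∑ j, phi (qn n j))))
        atTop (𝓝 (c * ((phi (∑ i, p i) - ∑ i, phi (p i)) - (phi (∑ j, q j) - ∑ j, phi (q j))))) :=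
      ((h1.sub h2).sub (h3.sub h4)).const_mul c
    have hcongr : ∀ n : ℕ,
        c * ((phi (∑ i, pn n i) - ∑ i, phi (pn n i)) - (phi (∑ j, qn n j) - ∑ j, phi (qn n j)))
          = c * (shannonExt (pn n) - shannonExt (qn n)) := by
      intro n
      rw [shannonExt_eq _ (hpn n), shannonExt_eq _ (hqn n)]
    rw [shannonExt_eq p hp, shannonExt_eq q hq]
    exact key.congr hcongr
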